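/- (Appendix Lemma: convergence of the generator at the mode-hopping point.) Let Φ denote the standard normal cumulative distribution function. Let p ∈ [0, 1], ℓ₀ > 0 and r₁, r₂ > 0, and set α₊ = 2Φ(-ℓ₀/(2√r₁)), α₋ = 2Φ(-ℓ₀/(2√r₂)), s₊ = α₊^{-1/2}, s₋ = α₋^{-1/2}. Let f : ℝ → ℝ and suppose there exist real numbers A₊, A₋ and C such that f(x) = f(0) + A₊ x + (C/2) x² + o(x²) as x → 0⁺ and f(x) = f(0) + A₋ x + (C/2) x² + o(x²) as x → 0⁻ (i.e. f has one-sided first derivatives A₊, A₋ at 0 and common one-sided second derivative C at 0), and suppose the skew matching condition p · α₊^{1/2} · A₊ = (1-p) · α₋^{1/2} · A₋ holds. Then lim_{d → ∞} d · [ p α₊ ( f(s₊ d^{-1/2}) - f(0) ) + (1-p) α₋ ( f(-s₋ d^{-1/2}) - f(0) ) ] = C/2. -/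

import Mathlib

open MeasureTheory Asymptotics Filter

/-- The standard normal cumulative distribution function
`Φ(t) = ∫_{-∞}^t (2π)^{-1/2} e^{-u²/2} du`. -/
noncomputable def stdNormCDF (t : ℝ) : ℝ :=
  ∫ u in Set.Iic t, (2 * Real.pi) ^ (-(1 : ℝ) / 2) * Real.exp (-u ^ 2 / 2)

lemma stdNormCDF_pos (t : ℝ) : 0 < stdNormCDF t := by
  unfold stdNormCDF
  have hint : Integrable (fun u : ℝ => (2 * Real.pi) ^ (-(1 : ℝ) / 2) * Real.exp (-u ^ 2 / 2)) := by
    have h := (integrable_exp_neg_mul_sq (b := (1/2:ℝ)) (by norm_num)).const_mul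
      ((2 * Real.pi) ^ (-(1 : ℝ) / 2))
    convert h using 2 with u
    ring_nf
  rw [setIntegral_pos_iff_support_of_nonneg_ae]
  · have : Function.support (fun u : ℝ => (2 * Real.pi) ^ (-(1 : ℝ) / 2) * Real.exp (-u ^ 2 / 2))
        = Set.univ := by
      ext u
      simp only [Function.mem_support, Set.mem_univ, iff_true]
      positivity
    rw [this, Set.univ_inter]
    simp
  · filter_upwards with u
    positivity
  · exact hint.integrableOn

/-- Appendix Lemma: convergence of the generator at the mode-hopping point:
with `α₊ = 2Φ(-ℓ₀/(2√r₁))`, `α₋ = 2Φ(-ℓ₀/(2√r₂))`, `s₊ = α₊^{-1/2}`, `s₋ = α₋^{-1/2}`, if `f`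
has one-sided second-order expansions at `0` with one-sided first derivatives `A₊, A₋`,
common one-sided second derivative `C`, and the skew matching condition
`p α₊^{1/2} A₊ = (1-p) α₋^{1/2} A₋` holds, then
`lim_{d→∞} d [p α₊ (f(s₊ d^{-1/2}) - f(0)) + (1-p) α₋ (f(-s₋ d^{-1/2}) - f(0))] = C/2`. -/
theorem generator_limit_at_mode_hop (p ℓ₀ r₁ r₂ : ℝ)
    (hp0 : 0 ≤ p) (hp1 : p ≤ 1) (hℓ₀ : 0 < ℓ₀) (hr₁ : 0 < r₁) (hr₂ : 0 < r₂)
    (αp αm sp sm : ℝ)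
    (hαp : αp = 2 * stdNormCDF (-ℓ₀ / (2 * Real.sqrt r₁)))
    (hαm : αm = 2 * stdNormCDF (-ℓ₀ / (2 * Real.sqrt r₂)))
    (hsp : sp = αp ^ (-(1 : ℝ) / 2)) (hsm : sm = αm ^ (-(1 : ℝ) / 2))
    (f : ℝ → ℝ) (Ap Am C : ℝ)
    (hf_plus : (fun x => f x - (f 0 + Ap * x + C / 2 * x ^ 2))
      =o[nhdsWithin 0 (Set.Ioi 0)] fun x => x ^ 2)
    (hf_minus : (fun x => f x - (f 0 + Am * x + C / 2 * x ^ 2))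
      =o[nhdsWithin 0 (Set.Iio 0)] fun x => x ^ 2)
    (hskew : p * αp ^ ((1 : ℝ) / 2) * Ap = (1 - p) * αm ^ ((1 : ℝ) / 2) * Am) :
    Tendsto (fun d : ℕ =>
        (d : ℝ) * (p * αp * (f (sp * (d : ℝ) ^ (-(1 : ℝ) / 2)) - f 0) +
          (1 - p) * αm * (f (-(sm * (d : ℝ) ^ (-(1 : ℝ) / 2))) - f 0)))
      atTop (nhds (C / 2)) := by
  -- positivity of α's and s's
  have hαp0 : 0 < αp := by rw [hαp]; linarith [stdNormCDF_pos (-ℓ₀ / (2 * Real.sqrt r₁))]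
  have hαm0 : 0 < αm := by rw [hαm]; linarith [stdNormCDF_pos (-ℓ₀ / (2 * Real.sqrt r₂))]
  have hsp0 : 0 < sp := hsp ▸ Real.rpow_pos_of_pos hαp0 _
  have hsm0 : 0 < sm := hsm ▸ Real.rpow_pos_of_pos hαm0 _
  -- key identities
  have hq1 : αp * sp ^ 2 = 1 := by
    rw [hsp, ← Real.rpow_natCast (αp ^ (-(1:ℝ)/2)) 2, ← Real.rpow_mul hαp0.le]
    norm_num
    rw [Real.rpow_neg_one]
    field_simp
  have hq2 : αm * sm ^ 2 = 1 := by
    rw [hsm, ← Real.rpow_natCast (αm ^ (-(1:ℝ)/2)) 2, ← Real.rpow_mul hαm0.le]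
    norm_num
    rw [Real.rpow_neg_one]
    field_simp
  have hαsp : αp * sp = αp ^ ((1:ℝ)/2) := by
    rw [hsp]
    nth_rewrite 1 [← Real.rpow_one αp]
    rw [← Real.rpow_add hαp0]
    norm_num
  have hαsm : αm * sm = αm ^ ((1:ℝ)/2) := by
    rw [hsm]
    nth_rewrite 1 [← Real.rpow_one αm]
    rw [← Real.rpow_add hαm0]
    norm_num
  have hlin : p * (αp * sp) * Ap = (1 - p) * (αm * sm) * Am := by
    rw [hαsp, hαsm]; exact hskew
  -- little-o compositions
  have hmapp : Tendsto (fun ε : ℝ => sp * ε) (nhdsWithin 0 (Set.Ioi 0))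
      (nhdsWithin 0 (Set.Ioi 0)) := by
    apply tendsto_nhdsWithin_of_tendsto_nhds_of_eventually_within
    · have h : Tendsto (fun ε : ℝ => sp * ε) (nhds 0) (nhds 0) := by
        simpa using (continuous_mul_left sp).tendsto 0
      exact h.mono_left nhdsWithin_le_nhds
    · filter_upwards [self_mem_nhdsWithin] with ε (hε : ε ∈ Set.Ioi 0)
      exact mul_pos hsp0 hε
  have hmapm : Tendsto (fun ε : ℝ => -(sm * ε)) (nhdsWithin 0 (Set.Ioi 0))
      (nhdsWithin 0 (Set.Iio 0)) := by
    apply tendsto_nhdsWithin_of_tendsto_nhds_of_eventually_within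
    · have h : Tendsto (fun ε : ℝ => -(sm * ε)) (nhds 0) (nhds 0) := by
        simpa using ((continuous_mul_left sm).tendsto 0).neg
      exact h.mono_left nhdsWithin_le_nhds
    · filter_upwards [self_mem_nhdsWithin] with ε (hε : ε ∈ Set.Ioi 0)
      simpa using mul_pos hsm0 hε
  have hop : (fun ε : ℝ => f (sp * ε) - (f 0 + Ap * (sp * ε) + C / 2 * (sp * ε) ^ 2))
      =o[nhdsWithin 0 (Set.Ioi 0)] fun ε => ε ^ 2 := by
    have h1 := hf_plus.comp_tendsto hmapp
    have h2 : (fun ε : ℝ => (sp * ε) ^ 2) =O[nhdsWithin 0 (Set.Ioi 0)] fun ε => ε ^ 2 := by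
      have : (fun ε : ℝ => (sp * ε) ^ 2) = fun ε => sp ^ 2 * ε ^ 2 := by
        funext ε; ring
      rw [this]
      exact (isBigO_refl (fun ε : ℝ => ε ^ 2) _).const_mul_left _
    exact h1.trans_isBigO h2
  have hom : (fun ε : ℝ => f (-(sm * ε)) - (f 0 + Am * (-(sm * ε)) + C / 2 * (-(sm * ε)) ^ 2))
      =o[nhdsWithin 0 (Set.Ioi 0)] fun ε => ε ^ 2 := by
    have h1 := hf_minus.comp_tendsto hmapm
    have h2 : (fun ε : ℝ => (-(sm * ε)) ^ 2) =O[nhdsWithin 0 (Set.Ioi 0)] fun ε => ε ^ 2 := by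
      have : (fun ε : ℝ => (-(sm * ε)) ^ 2) = fun ε => sm ^ 2 * ε ^ 2 := by
        funext ε; ring
      rw [this]
      exact (isBigO_refl (fun ε : ℝ => ε ^ 2) _).const_mul_left _
    exact h1.trans_isBigO h2
  have tp := hop.tendsto_div_nhds_zero
  have tm := hom.tendsto_div_nhds_zero
  -- limit of the ε-parametrized generator
  have hT : Tendsto (fun ε : ℝ =>
      p * αp * ((f (sp * ε) - (f 0 + Ap * (sp * ε) + C / 2 * (sp * ε) ^ 2)) / ε ^ 2)
      + (1 - p) * αm * ((f (-(sm * ε)) - (f 0 + Am * (-(sm * ε)) + C / 2 * (-(sm * ε)) ^ 2)) / ε ^ 2)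
      + C / 2) (nhdsWithin 0 (Set.Ioi 0)) (nhds (C / 2)) := by
    have := (((tp.const_mul (p * αp)).add (tm.const_mul ((1 - p) * αm))).add tendsto_const_nhds
      (b := C / 2))
    simpa using this
  have key : ∀ ε : ℝ, ε ≠ 0 →
      (ε ^ 2)⁻¹ * (p * αp * (f (sp * ε) - f 0) + (1 - p) * αm * (f (-(sm * ε)) - f 0)) =
      p * αp * ((f (sp * ε) - (f 0 + Ap * (sp * ε) + C / 2 * (sp * ε) ^ 2)) / ε ^ 2)
      + (1 - p) * αm * ((f (-(sm * ε)) - (f 0 + Am * (-(sm * ε)) + C / 2 * (-(sm * ε)) ^ 2)) / ε ^ 2)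
      + C / 2 := by
    intro ε hε
    field_simp
    ring_nf
    linear_combination (2 * ε) * hlin + (C * ε ^ 2 * p) * hq1
      + (C * ε ^ 2 * (1 - p)) * hq2
  -- F tends to C/2 along 0+
  have hF : Tendsto (fun ε : ℝ =>
      (ε ^ 2)⁻¹ * (p * αp * (f (sp * ε) - f 0) + (1 - p) * αm * (f (-(sm * ε)) - f 0)))
      (nhdsWithin 0 (Set.Ioi 0)) (nhds (C / 2)) := by
    apply hT.congr'
    filter_upwards [self_mem_nhdsWithin] with ε (hε : ε ∈ Set.Ioi 0)
    exact (key ε (ne_of_gt hε)).symm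
  -- compose with ε_d = d^(-1/2)
  have hεd : Tendsto (fun d : ℕ => (d : ℝ) ^ (-(1:ℝ)/2)) atTop (nhdsWithin 0 (Set.Ioi 0)) := by
    apply tendsto_nhdsWithin_of_tendsto_nhds_of_eventually_within
    · have h := tendsto_rpow_neg_atTop (y := (1:ℝ)/2) (by norm_num)
      have := h.comp (tendsto_natCast_atTop_atTop (R := ℝ))
      simpa [neg_div, Function.comp_def] using this
    · filter_upwards [eventually_ge_atTop 1] with d hd
      have : (0:ℝ) < (d:ℝ) := by exact_mod_cast hd
      exact Real.rpow_pos_of_pos this _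
  have hcomp := hF.comp hεd
  apply hcomp.congr
  intro d
  have hsq : (((d : ℝ) ^ (-(1:ℝ)/2)) ^ 2)⁻¹ = (d : ℝ) := by
    rw [← Real.rpow_natCast ((d:ℝ) ^ (-(1:ℝ)/2)) 2, ← Real.rpow_mul (Nat.cast_nonneg d)]
    norm_num
    rw [Real.rpow_neg_one, inv_inv]
  simp only [Function.comp]
  rw [hsq]
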